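/- Let G = (V, E) be a finite simple graph and let A ⊆ V. Then G is collapsible onto A if and only if for every connected component of the induced subgraph G_{V \ A} with vertex set M, the neighbour set N_G(M) is complete in G. (The characterization of Asmussen and Edwards used throughout the paper's proofs of Theorems 1 and 2.) -/

import Mathlib

/-- `S` separates `X` from `Y` in `G`: every path in `G` from a vertex of `X`
to a vertex of `Y` contains a vertex of `S`. -/
def Separates {V : Type*} (G : SimpleGraph V) (X Y S : Set V) : Prop :=
  ∀ ⦃a b : V⦄, a ∈ X → b ∈ Y → ∀ p : G.Walk a b, p.IsPath → ∃ s ∈ S, s ∈ p.support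

/-- `S` is an `xy`-separator in `G`: `S ⊆ V \ {x, y}` and `S` separates `{x}` from `{y}`. -/
def IsSeparator {V : Type*} (G : SimpleGraph V) (x y : V) (S : Set V) : Prop :=
  S ⊆ ({x, y} : Set V)ᶜ ∧ Separates G {x} {y} S

/-- `S` is a minimal `xy`-separator in `G`: it is an `xy`-separator and no proper
subset of `S` is an `xy`-separator. -/
def IsMinSeparator {V : Type*} (G : SimpleGraph V) (x y : V) (S : Set V) : Prop :=
  IsSeparator G x y S ∧ ∀ T ⊂ S, ¬ IsSeparator G x y T

/-- `G` is collapsible onto `A` (Asmussen–Edwards characterization): for all pairwise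
disjoint `X, Y, Z` with `X ⊆ A` and `Y ⊆ A`, if `Z` separates `X` from `Y`, then so
does `Z ∩ A`. -/
def Collapsible {V : Type*} (G : SimpleGraph V) (A : Set V) : Prop :=
  ∀ X Y Z : Set V, X ⊆ A → Y ⊆ A → Disjoint X Y → Disjoint X Z → Disjoint Y Z →
    Separates G X Y Z → Separates G X Y (Z ∩ A)

/-- The neighbour set `N_G(W)`: vertices outside `W` adjacent in `G` to some vertex of `W`. -/
def nbhd {V : Type*} (G : SimpleGraph V) (W : Set V) : Set V :=
  {v | v ∉ W ∧ ∃ w ∈ W, G.Adj v w}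

/-- `M` is the vertex set of a connected component of the induced subgraph `G_W`. -/
def IsCompOf {V : Type*} (G : SimpleGraph V) (W M : Set V) : Prop :=
  ∃ c : (G.induce W).ConnectedComponent, M = Subtype.val '' c.supp

/-- A subset of `V` is complete in `G` if its vertices are pairwise adjacent. -/
def CompleteIn {V : Type*} (G : SimpleGraph V) (S : Set V) : Prop :=
  ∀ x ∈ S, ∀ y ∈ S, x ≠ y → G.Adj x y

/-- Reachability within a vertex set `s`, expressed with walks in `G`. -/
def ReachIn {V : Type*} (G : SimpleGraph V) (s : Set V) (x y : V) : Prop :=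
  ∃ w : G.Walk x y, ∀ z ∈ w.support, z ∈ s

lemma reachIn_of_induce {V : Type*} {G : SimpleGraph V} {s : Set V} (x y : s)
    (h : (G.induce s).Reachable x y) : ReachIn G s x.1 y.1 := by
  obtain ⟨w⟩ := h
  induction w with
  | nil => exact ⟨SimpleGraph.Walk.nil, by simp⟩
  | cons h p ih =>
    obtain ⟨w', hw'⟩ := ih
    refine ⟨SimpleGraph.Walk.cons h w', ?_⟩
    intro z hz
    change z ∈ List.cons _ w'.support at hz
    rcases List.mem_cons.1 hz with rfl | hz
    · exact Subtype.coe_prop _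
    · exact hw' z hz

lemma induce_reachable_of_reachIn {V : Type*} {G : SimpleGraph V} {s : Set V} {x y : V}
    (h : ReachIn G s x y) (hx : x ∈ s) (hy : y ∈ s) :
    (G.induce s).Reachable ⟨x, hx⟩ ⟨y, hy⟩ := by
  obtain ⟨w, hw⟩ := h
  induction w with
  | nil => exact SimpleGraph.Reachable.refl _
  | @cons a b c h p ih =>
    have hb : b ∈ s := hw b (by simp)
    have h1 : (G.induce s).Adj ⟨a, hx⟩ ⟨b, hb⟩ := h
    exact h1.reachable.trans (ih hb hy (fun z hz => hw z (by simp [hz])))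

lemma main_walk {V : Type*} {G : SimpleGraph V} {A : Set V}
    (H' : ∀ a a' m m', a ∈ A → a' ∈ A → m ∉ A → m' ∉ A →
      G.Adj a m → G.Adj a' m' → ReachIn G Aᶜ m m' → a ≠ a' → G.Adj a a') :
    ∀ n (c b : V) (p : G.Walk c b), p.length ≤ n → b ∈ A →
      ((c ∈ A → ∃ w : G.Walk c b, ∀ x ∈ w.support, x ∈ p.support ∧ x ∈ A) ∧
       (∀ a, a ∈ A → c ∉ A → (∃ m, m ∉ A ∧ G.Adj a m ∧ ReachIn G Aᶜ m c) →
          ∃ w : G.Walk a b, ∀ x ∈ w.support, x = a ∨ (x ∈ p.support ∧ x ∈ A))) := by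
  intro n
  induction n with
  | zero =>
    intro c b p hlen hb
    cases p with
    | nil =>
      constructor
      · intro hc
        exact ⟨SimpleGraph.Walk.nil, by simp [hb]⟩
      · intro a ha hc _
        exact absurd hb hc
    | cons h q => simp at hlen
  | succ n ih =>
    intro c b p hlen hb
    cases p with
    | nil =>
      constructor
      · intro hc
        exact ⟨SimpleGraph.Walk.nil, by simp [hb]⟩
      · intro a ha hc _
        exact absurd hb hc
    | @cons _ d _ h q =>
      have hlen' : q.length ≤ n := by
        simpa [Nat.succ_le_succ_iff] using hlen
      constructor
      · -- part 1: c ∈ A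
        intro hc
        by_cases hd : d ∈ A
        · obtain ⟨w, hw⟩ := (ih d b q hlen' hb).1 hd
          refine ⟨SimpleGraph.Walk.cons h w, ?_⟩
          intro x hx
          rw [SimpleGraph.Walk.support_cons] at hx
          rcases List.mem_cons.1 hx with rfl | hx
          · exact ⟨by simp, hc⟩
          · exact ⟨by simp [(hw x hx).1], (hw x hx).2⟩
        · obtain ⟨w, hw⟩ := (ih d b q hlen' hb).2 c hc hd
            ⟨d, hd, h, ⟨SimpleGraph.Walk.nil, by simp [hd]⟩⟩
          refine ⟨w, ?_⟩
          intro x hx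
          rcases hw x hx with rfl | ⟨h1, h2⟩
          · exact ⟨by simp, hc⟩
          · exact ⟨by simp [h1], h2⟩
      · -- part 2: c ∉ A
        intro a ha hc ⟨m, hm, ham, hreach⟩
        by_cases hd : d ∈ A
        · -- exiting the A-complement region
          obtain ⟨w, hw⟩ := (ih d b q hlen' hb).1 hd
          by_cases had : a = d
          · subst had
            refine ⟨w, fun x hx => Or.inr ⟨by simp [(hw x hx).1], (hw x hx).2⟩⟩
          · have hadj : G.Adj a d := H' a d m c ha hd hm hc ham h.symm hreach had
            refine ⟨SimpleGraph.Walk.cons hadj w, ?_⟩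
            intro x hx
            rw [SimpleGraph.Walk.support_cons] at hx
            rcases List.mem_cons.1 hx with rfl | hx
            · exact Or.inl rfl
            · exact Or.inr ⟨by simp [(hw x hx).1], (hw x hx).2⟩
        · -- staying in the A-complement region
          obtain ⟨wr, hwr⟩ := hreach
          have hreach' : ReachIn G Aᶜ m d := by
            refine ⟨wr.append (SimpleGraph.Walk.cons h SimpleGraph.Walk.nil), ?_⟩
            intro z hz
            rcases (SimpleGraph.Walk.mem_support_append_iff _ _).1 hz with hz | hz
            · exact hwr z hz
            · simp at hz
              rcases hz with rfl | rfl
              · exact hc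
              · exact hd
          obtain ⟨w, hw⟩ := (ih d b q hlen' hb).2 a ha hd ⟨m, hm, ham, hreach'⟩
          refine ⟨w, ?_⟩
          intro x hx
          rcases hw x hx with rfl | ⟨h1, h2⟩
          · exact Or.inl rfl
          · exact Or.inr ⟨by simp [h1], h2⟩

/-- Asmussen–Edwards: `G` is collapsible onto `A` iff the neighbour set of every
connected component of `G_{V \\ A}` is complete in `G`. -/
theorem collapsible_iff_component_neighbours_complete
    {V : Type*} [Fintype V] (G : SimpleGraph V) (A : Set V) :
    Collapsible G A ↔
      ∀ M : Set V, IsCompOf G Aᶜ M → CompleteIn G (nbhd G M) := by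
  classical
  constructor
  · -- collapsible → complete neighbourhoods
    intro hcol M ⟨cc, hM⟩ u hu v hv huv
    by_contra hadj
    -- u, v ∈ A
    have hMsub : M ⊆ Aᶜ := by
      intro x hx
      rw [hM] at hx
      obtain ⟨⟨x', hx'⟩, _, rfl⟩ := hx
      exact hx'
    have memA : ∀ x ∈ nbhd G M, x ∈ A := by
      rintro x ⟨hxM, m, hmM, hxm⟩
      by_contra hxA
      apply hxM
      subst hM
      obtain ⟨⟨m', hm'⟩, hm'c, rfl⟩ := hmM
      have : (G.induce Aᶜ).Adj ⟨x, hxA⟩ ⟨m', hm'⟩ := hxm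
      refine ⟨⟨x, hxA⟩, ?_, rfl⟩
      rw [SimpleGraph.ConnectedComponent.mem_supp_iff] at hm'c ⊢
      rw [← hm'c]
      exact SimpleGraph.ConnectedComponent.eq.2 this.reachable
    have huA := memA u hu
    have hvA := memA v hv
    -- walk from u to v through the component
    obtain ⟨hum, m1, hm1M, hum1⟩ := hu
    obtain ⟨hvm, m2, hm2M, hvm2⟩ := hv
    have hm1 : m1 ∈ Aᶜ := hMsub hm1M
    have hm2 : m2 ∈ Aᶜ := hMsub hm2M
    have hr : ReachIn G Aᶜ m1 m2 := by
      subst hM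
      obtain ⟨m1', h1c, h1e⟩ := hm1M
      obtain ⟨m2', h2c, h2e⟩ := hm2M
      rw [SimpleGraph.ConnectedComponent.mem_supp_iff] at h1c h2c
      have : (G.induce Aᶜ).Reachable m1' m2' :=
        SimpleGraph.ConnectedComponent.eq.1 (h1c.trans h2c.symm)
      have := reachIn_of_induce m1' m2' this
      rwa [h1e, h2e] at this
    obtain ⟨wr, hwr⟩ := hr
    set W : G.Walk u v :=
      SimpleGraph.Walk.cons hum1 (wr.append (SimpleGraph.Walk.cons hvm2.symm SimpleGraph.Walk.nil))
      with hW
    have hWsupp : ∀ x ∈ W.support, x = u ∨ x = v ∨ x ∈ Aᶜ := by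
      intro x hx
      rw [hW, SimpleGraph.Walk.support_cons] at hx
      rcases List.mem_cons.1 hx with rfl | hx
      · exact Or.inl rfl
      rcases (SimpleGraph.Walk.mem_support_append_iff _ _).1 hx with hx | hx
      · exact Or.inr (Or.inr (hwr x hx))
      · simp at hx
        rcases hx with rfl | rfl
        · exact Or.inr (Or.inr hm2)
        · exact Or.inr (Or.inl rfl)
    -- Z = {u,v}ᶜ separates {u} from {v}
    have hsep : ∀ ⦃a b : V⦄, a ∈ ({u} : Set V) → b ∈ ({v} : Set V) →
        ∀ p : G.Walk a b, p.IsPath → ∃ s ∈ ({u, v} : Set V)ᶜ, s ∈ p.support := by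
      intro a b ha hb p hp
      rw [Set.mem_singleton_iff] at ha hb
      subst ha; subst hb
      by_contra hno
      push_neg at hno
      apply hadj
      cases p with
      | nil => exact absurd rfl huv
      | @cons _ d _ h q =>
        have hdm : d = a ∨ d = b := by
          by_contra hdm
          push_neg at hdm
          exact hno d (by simp [hdm.1, hdm.2])
            (by rw [SimpleGraph.Walk.support_cons]
                exact List.mem_cons_of_mem _ q.start_mem_support)
        rcases hdm with rfl | rfl
        · rw [SimpleGraph.Walk.cons_isPath_iff] at hp
          exact absurd q.start_mem_support hp.2
        · exact h
    have hsep2 := hcol {u} {v} ({u, v} : Set V)ᶜ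
      (by simpa using huA) (by simpa using hvA)
      (by simp [Set.disjoint_singleton, huv])
      (by simp [Set.disjoint_left])
      (by simp [Set.disjoint_left])
      hsep
    obtain ⟨s, ⟨hs1, hs2⟩, hs3⟩ := hsep2 (Set.mem_singleton u) (Set.mem_singleton v)
      W.toPath.1 W.toPath.2
    have := hWsupp s (SimpleGraph.Walk.support_toPath_subset W hs3)
    rcases this with rfl | rfl | hsk
    · exact hs1 (by simp)
    · exact hs1 (by simp)
    · exact hsk hs2
  · -- complete neighbourhoods → collapsible
    intro hcomp X Y Z hXA hYA _ _ _ hsep a b ha hb p hp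
    by_contra hno
    push_neg at hno
    have H' : ∀ x x' m m', x ∈ A → x' ∈ A → m ∉ A → m' ∉ A →
        G.Adj x m → G.Adj x' m' → ReachIn G Aᶜ m m' → x ≠ x' → G.Adj x x' := by
      intro x x' m m' hx hx' hm hm' hxm hx'm' hr hxx'
      set cc := (G.induce Aᶜ).connectedComponentMk ⟨m, hm⟩ with hcc
      set M : Set V := Subtype.val '' cc.supp with hMdef
      have hmM : m ∈ M := ⟨⟨m, hm⟩, by rw [SimpleGraph.ConnectedComponent.mem_supp_iff], rfl⟩
      have hm'M : m' ∈ M := by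
        refine ⟨⟨m', hm'⟩, ?_, rfl⟩
        rw [SimpleGraph.ConnectedComponent.mem_supp_iff, hcc]
        exact (SimpleGraph.ConnectedComponent.eq.2
          (induce_reachable_of_reachIn hr hm hm')).symm
      have hMsub : M ⊆ Aᶜ := by
        rintro z ⟨⟨z', hz'⟩, _, rfl⟩
        exact hz'
      exact hcomp M ⟨cc, rfl⟩ x ⟨fun hxM => hMsub hxM hx, m, hmM, hxm⟩
        x' ⟨fun hxM => hMsub hxM hx', m', hm'M, hx'm'⟩ hxx'
    obtain ⟨w, hw⟩ := (main_walk H' p.length a b p le_rfl (hYA hb)).1 (hXA ha)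
    obtain ⟨s, hsZ, hs3⟩ := hsep ha hb w.toPath.1 w.toPath.2
    have hsw := hw s (SimpleGraph.Walk.support_toPath_subset w hs3)
    exact hno s ⟨hsZ, hsw.2⟩ hsw.1
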